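/- Let V and W be d-dimensional oriented real inner product spaces and A : V → W linear. Then A is an orientation-preserving isometry (A ∈ SO(V,W)) if and only if Det A = 1 and Cof A = A. -/

import Mathlib

open scoped RealInnerProductSpace
open Module Matrix

noncomputable section

variable {V W : Type*} [NormedAddCommGroup V] [InnerProductSpace ℝ V]
  [NormedAddCommGroup W] [InnerProductSpace ℝ W]

/-- The intrinsic determinant `Det A = ⋆_W^d ∘ Λ^d A ∘ ⋆_V^0` of a linear map between
`d`-dimensional oriented inner product spaces: it equals the determinant of the matrix
of `A` with respect to (any) positively oriented orthonormal bases. -/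
def IntrinsicDet {d : ℕ} (hd : 0 < d) (hV : finrank ℝ V = d) (hW : finrank ℝ W = d)
    (oV : Orientation ℝ V (Fin d)) (oW : Orientation ℝ W (Fin d)) (A : V →ₗ[ℝ] W) : ℝ :=
  (LinearMap.toMatrix (oV.finOrthonormalBasis hd hV).toBasis
    (oW.finOrthonormalBasis hd hW).toBasis A).det

/-- The intrinsic cofactor `Cof A = (-1)^{d-1} ⋆_W^{d-1} ∘ Λ^{d-1} A ∘ ⋆_V^1` of a linear map
between `d`-dimensional oriented inner product spaces: its matrix with respect to positively
oriented orthonormal bases is the classical cofactor matrix (the transpose of the adjugate). -/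
def IntrinsicCof {d : ℕ} (hd : 0 < d) (hV : finrank ℝ V = d) (hW : finrank ℝ W = d)
    (oV : Orientation ℝ V (Fin d)) (oW : Orientation ℝ W (Fin d)) (A : V →ₗ[ℝ] W) :
    V →ₗ[ℝ] W :=
  Matrix.toLin (oV.finOrthonormalBasis hd hV).toBasis (oW.finOrthonormalBasis hd hW).toBasis
    ((Matrix.adjugate (LinearMap.toMatrix (oV.finOrthonormalBasis hd hV).toBasis
      (oW.finOrthonormalBasis hd hW).toBasis A))ᵀ)


/-- `SO(V,W)`: the set of orientation-preserving linear isometries between `d`-dimensional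
oriented inner product spaces: inner-product-preserving linear maps with intrinsic
determinant `1` (for an isometry, `Det A = 1` is exactly orientation preservation). -/
def SOHom {d : ℕ} (hd : 0 < d) (hV : finrank ℝ V = d) (hW : finrank ℝ W = d)
    (oV : Orientation ℝ V (Fin d)) (oW : Orientation ℝ W (Fin d)) : Set (V →ₗ[ℝ] W) :=
  {A | (∀ v v' : V, ⟪A v, A v'⟫ = ⟪v, v'⟫) ∧ IntrinsicDet hd hV hW oV oW A = 1}

-- auxiliary lemmas
private lemma matrix_key {d : ℕ} (M : Matrix (Fin d) (Fin d) ℝ) (hdet : M.det = 1) :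
    Mᵀ * M = 1 ↔ (M.adjugate)ᵀ = M := by
  have hMadj : M * M.adjugate = 1 := by rw [Matrix.mul_adjugate, hdet, one_smul]
  constructor
  · intro h
    have h2 : M * Mᵀ = 1 := mul_eq_one_comm.mp h
    have : M.adjugate = Mᵀ := by
      have := mul_eq_one_comm.mp hMadj
      calc M.adjugate = M.adjugate * (M * Mᵀ) := by rw [h2, Matrix.mul_one]
        _ = (M.adjugate * M) * Mᵀ := by rw [Matrix.mul_assoc]
        _ = Mᵀ := by rw [this, Matrix.one_mul]
    rw [this, Matrix.transpose_transpose]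
  · intro h
    have : M.adjugate = Mᵀ := by simpa using congrArg Matrix.transpose h
    rw [this] at hMadj
    exact mul_eq_one_comm.mp hMadj

lemma inner_iff [FiniteDimensional ℝ V] [FiniteDimensional ℝ W] {d : ℕ}
    (b : OrthonormalBasis (Fin d) ℝ V) (c : OrthonormalBasis (Fin d) ℝ W) (A : V →ₗ[ℝ] W) :
    (∀ v v' : V, ⟪A v, A v'⟫ = ⟪v, v'⟫) ↔
      (LinearMap.toMatrix b.toBasis c.toBasis A)ᵀ * (LinearMap.toMatrix b.toBasis c.toBasis A)
        = 1 := by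
  have hadj : (∀ v v' : V, ⟪A v, A v'⟫ = ⟪v, v'⟫) ↔
      LinearMap.adjoint A ∘ₗ A = LinearMap.id := by
    constructor
    · intro h
      ext x
      refine ext_inner_right ℝ fun y => ?_
      simpa [LinearMap.adjoint_inner_left] using h x y
    · intro h v v'
      rw [← LinearMap.adjoint_inner_left]
      have := congrArg (fun f => f v) h
      simp only [LinearMap.comp_apply, LinearMap.id_apply] at this
      rw [this]
  rw [hadj]
  constructor
  · intro h
    have := congrArg (LinearMap.toMatrix b.toBasis b.toBasis) h
    rw [LinearMap.toMatrix_comp b.toBasis c.toBasis b.toBasis,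
      LinearMap.toMatrix_adjoint b c, LinearMap.toMatrix_id] at this
    simpa [Matrix.conjTranspose_eq_transpose_of_trivial] using this
  · intro h
    apply (LinearMap.toMatrix b.toBasis b.toBasis).injective
    rw [LinearMap.toMatrix_comp b.toBasis c.toBasis b.toBasis,
      LinearMap.toMatrix_adjoint b c, LinearMap.toMatrix_id]
    simpa [Matrix.conjTranspose_eq_transpose_of_trivial] using h

/-- `A ∈ SO(V,W)` iff `Det A = 1` and `Cof A = A`. -/
theorem mem_SO_iff_det_cof [FiniteDimensional ℝ V] [FiniteDimensional ℝ W]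
    {d : ℕ} (hd : 0 < d) (hV : finrank ℝ V = d) (hW : finrank ℝ W = d)
    (oV : Orientation ℝ V (Fin d)) (oW : Orientation ℝ W (Fin d)) (A : V →ₗ[ℝ] W) :
    A ∈ SOHom hd hV hW oV oW ↔
      IntrinsicDet hd hV hW oV oW A = 1 ∧ IntrinsicCof hd hV hW oV oW A = A := by
  set b := oV.finOrthonormalBasis hd hV with hb
  set c := oW.finOrthonormalBasis hd hW with hc
  set M := LinearMap.toMatrix b.toBasis c.toBasis A with hM
  have hdet : IntrinsicDet hd hV hW oV oW A = M.det := rfl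
  have hcof : IntrinsicCof hd hV hW oV oW A = A ↔ (M.adjugate)ᵀ = M := by
    constructor
    · intro h
      have := congrArg (LinearMap.toMatrix b.toBasis c.toBasis) h
      rwa [IntrinsicCof, LinearMap.toMatrix_toLin] at this
    · intro h
      rw [IntrinsicCof, ← hb, ← hc, ← hM, h, Matrix.toLin_toMatrix]
  rw [SOHom, Set.mem_setOf_eq, inner_iff b c A, ← hM, hdet, hcof]
  constructor
  · rintro ⟨h1, h2⟩
    exact ⟨h2, (matrix_key M h2).mp h1⟩
  · rintro ⟨h1, h2⟩
    exact ⟨(matrix_key M h1).mpr h2, h1⟩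

end
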